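/- arXiv:1907.09689 — 2 statements merged into one kernel-verified Lean document; each statement's English description precedes it below -/
import Mathlib

section
/- Let ξ be a state on Mat_n(ℂ) and let φ : Mat_n(ℂ) → Mat_n(ℂ) be a completely positive unital map with Kraus decomposition φ = Σᵢ₌₁^p Ad_{Vᵢ}. If φ(A)P_ξ = A P_ξ for all A ∈ Mat_n(ℂ) (where P_ξ is the support projection of ξ), then there exist complex numbers α₁,…,α_p with Vᵢ = αᵢ·1ₙ for all i and Σᵢ |αᵢ|² = 1. In particular φ = id. -/
open Matrix ComplexOrder

private lemma sum_mulVec' {n p : ℕ} (f : Fin p → Matrix (Fin n) (Fin n) ℂ) (v : Fin n → ℂ) :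
    (∑ i, f i) *ᵥ v = ∑ i, f i *ᵥ v := by
  ext a
  simp only [Matrix.mulVec, dotProduct, Finset.sum_apply, Matrix.sum_apply, Finset.sum_mul]
  rw [Finset.sum_comm]

private lemma dot_sum' {n p : ℕ} (v : Fin n → ℂ) (u : Fin p → Fin n → ℂ) :
    v ⬝ᵥ (∑ i, u i) = ∑ i, v ⬝ᵥ u i := by
  simp only [dotProduct, Finset.sum_apply, Finset.mul_sum]
  rw [Finset.sum_comm]

private lemma hdot' {n : ℕ} (M : Matrix (Fin n) (Fin n) ℂ) (v w : Fin n → ℂ) :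
    star v ⬝ᵥ (M *ᵥ w) = star (Mᴴ *ᵥ v) ⬝ᵥ w := by
  rw [Matrix.star_mulVec, Matrix.conjTranspose_conjTranspose, Matrix.dotProduct_mulVec]

private lemma star_mul_self_eq (z : ℂ) : star z * z = ((‖z‖^2 : ℝ) : ℂ) := by
  rw [Complex.star_def, mul_comm, Complex.mul_conj]
  norm_cast
  rw [Complex.normSq_eq_norm_sq]

private lemma lemB {n p : ℕ} (x : Fin n → ℂ)
    (V : Fin p → Matrix (Fin n) (Fin n) ℂ)
    (haev : ∀ A : Matrix (Fin n) (Fin n) ℂ,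
      ∑ i, (V i) *ᵥ (A *ᵥ ((V i)ᴴ *ᵥ x)) = A *ᵥ x) :
    ∑ i, (star x ⬝ᵥ ((V i)ᴴ *ᵥ x)) • V i = (star x ⬝ᵥ x) • (1 : Matrix (Fin n) (Fin n) ℂ) := by
  have hA : ∀ (u v : Fin n → ℂ), vecMulVec u (star x) *ᵥ v = (star x ⬝ᵥ v) • u := by
    intro u v; funext a
    simp only [vecMulVec, Matrix.mulVec, dotProduct, Finset.mul_sum, Pi.smul_apply,
      smul_eq_mul, Matrix.of_apply]
    rw [Finset.sum_mul]; exact Finset.sum_congr rfl fun b _ => by ring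
  have hu : ∀ u : Fin n → ℂ, ∑ i, (star x ⬝ᵥ ((V i)ᴴ *ᵥ x)) • (V i *ᵥ u) = (star x ⬝ᵥ x) • u := by
    intro u
    have h := haev (vecMulVec u (star x))
    simpa only [hA, Matrix.mulVec_smul] using h
  ext r q
  have h := congrFun (hu (Pi.single q 1)) r
  simp only [Finset.sum_apply, Pi.smul_apply, Matrix.mulVec_single, mul_one, smul_eq_mul,
    Matrix.smul_apply, Matrix.sum_apply, Matrix.one_apply, Pi.single_apply] at h ⊢
  simpa [eq_comm] using h

private lemma lemC {n p : ℕ} (c s : ℂ) (β : Fin p → ℂ) (hcs : star c = c)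
    (hs : s = ∑ i, star (β i) * β i)
    (V : Fin p → Matrix (Fin n) (Fin n) ℂ)
    (hunital : ∑ i, V i * (V i)ᴴ = 1)
    (hβV : ∑ i, β i • V i = c • (1 : Matrix (Fin n) (Fin n) ℂ)) :
    ∑ i, (c • V i - star (β i) • 1) * (c • V i - star (β i) • (1 : Matrix (Fin n) (Fin n) ℂ))ᴴ
      = (s - c^2) • 1 := by
  have hβV' : ∑ i, star (β i) • (V i)ᴴ = c • (1 : Matrix (Fin n) (Fin n) ℂ) := by
    have h := congrArg conjTranspose hβV
    simpa [Matrix.conjTranspose_sum, Matrix.conjTranspose_smul, hcs] using h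
  have hterm : ∀ i, (c • V i - star (β i) • 1) * (c • V i - star (β i) • (1 : Matrix (Fin n) (Fin n) ℂ))ᴴ
      = (c*c) • (V i * (V i)ᴴ) - c • (β i • V i) - c • (star (β i) • (V i)ᴴ)
        + (star (β i) * β i) • 1 := by
    intro i
    have hNH : (c • V i - star (β i) • (1 : Matrix (Fin n) (Fin n) ℂ))ᴴ
        = c • (V i)ᴴ - β i • 1 := by
      simp [Matrix.conjTranspose_smul, hcs]
    rw [hNH, sub_mul, mul_sub, mul_sub]
    simp only [Matrix.smul_mul, Matrix.mul_smul, smul_smul, Matrix.one_mul, Matrix.mul_one]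
    module
  rw [Finset.sum_congr rfl fun i _ => hterm i]
  rw [Finset.sum_add_distrib, Finset.sum_sub_distrib, Finset.sum_sub_distrib,
    ← Finset.smul_sum, ← Finset.smul_sum, ← Finset.smul_sum, hunital, hβV, hβV',
    ← Finset.sum_smul, ← hs]
  module

private lemma lemD {n p : ℕ} (x : Fin n → ℂ)
    (V N : Fin p → Matrix (Fin n) (Fin n) ℂ)
    (hcs : star (star x ⬝ᵥ x) = star x ⬝ᵥ x)
    (hunital : ∑ i, V i * (V i)ᴴ = 1)
    (hN : ∀ i, N i = (star x ⬝ᵥ x) • V i - star (star x ⬝ᵥ ((V i)ᴴ *ᵥ x)) • 1)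
    (hNsum : ∑ i, N i * (N i)ᴴ
      = ((∑ i, star (star x ⬝ᵥ ((V i)ᴴ *ᵥ x)) * (star x ⬝ᵥ ((V i)ᴴ *ᵥ x))) - (star x ⬝ᵥ x)^2) • 1) :
    (∑ i, star (star x ⬝ᵥ ((V i)ᴴ *ᵥ x)) * (star x ⬝ᵥ ((V i)ᴴ *ᵥ x))) = (star x ⬝ᵥ x)^2
      ∨ (star x ⬝ᵥ x) = 0 := by
  set c : ℂ := star x ⬝ᵥ x with hc
  set w : Fin p → Fin n → ℂ := fun i => (V i)ᴴ *ᵥ x with hw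
  set β : Fin p → ℂ := fun i => star x ⬝ᵥ w i with hβ
  set s : ℂ := ∑ i, star (β i) * β i with hs
  have Q1 : star x ⬝ᵥ ((∑ i, N i * (N i)ᴴ) *ᵥ x) = (s - c^2) * c := by
    rw [hNsum, Matrix.smul_mulVec, Matrix.one_mulVec, dotProduct_smul, smul_eq_mul]
  have Q2 : star x ⬝ᵥ ((∑ i, N i * (N i)ᴴ) *ᵥ x)
      = ∑ i, star ((N i)ᴴ *ᵥ x) ⬝ᵥ ((N i)ᴴ *ᵥ x) := by
    rw [sum_mulVec', dot_sum']
    refine Finset.sum_congr rfl fun i _ => ?_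
    rw [← Matrix.mulVec_mulVec, hdot']
  have hNHx : ∀ i, (N i)ᴴ *ᵥ x = c • w i - β i • x := by
    intro i
    have hNH : (N i)ᴴ = c • (V i)ᴴ - β i • 1 := by
      rw [hN i]; simp [Matrix.conjTranspose_smul, hcs]; rfl
    rw [hNH, Matrix.sub_mulVec, Matrix.smul_mulVec, Matrix.smul_mulVec,
      Matrix.one_mulVec]
  have hsw : ∀ i, star (w i) ⬝ᵥ x = star (β i) := by
    intro i
    have : star (β i) = star (star x ⬝ᵥ w i) := rfl
    rw [this, star_dotProduct]
  have hww : ∑ i, star (w i) ⬝ᵥ w i = c := by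
    have h1 : ∀ i, star x ⬝ᵥ ((V i * (V i)ᴴ) *ᵥ x) = star (w i) ⬝ᵥ w i := by
      intro i
      rw [← Matrix.mulVec_mulVec, hdot']
    rw [Finset.sum_congr rfl fun i _ => (h1 i).symm, ← dot_sum', ← sum_mulVec', hunital,
      Matrix.one_mulVec]
  have Q3 : ∑ i, star ((N i)ᴴ *ᵥ x) ⬝ᵥ ((N i)ᴴ *ᵥ x) = c*c*c - c*s := by
    have h1 : ∀ i, star ((N i)ᴴ *ᵥ x) ⬝ᵥ ((N i)ᴴ *ᵥ x)
        = (c*c) * (star (w i) ⬝ᵥ w i) - (c * β i) * star (β i) - (star (β i) * c) * β i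
          + star (β i) * β i * c := by
      intro i
      rw [hNHx i]
      have hstar : star (c • w i - β i • x) = c • star (w i) - star (β i) • star x := by
        simp [star_sub, star_smul, hcs]
      rw [hstar]
      simp only [sub_dotProduct, dotProduct_sub, smul_dotProduct,
        dotProduct_smul, smul_eq_mul, hsw i]
      rw [show star x ⬝ᵥ w i = β i from rfl, ← hc]
      ring
    rw [Finset.sum_congr rfl fun i _ => h1 i]
    rw [Finset.sum_add_distrib, Finset.sum_sub_distrib, Finset.sum_sub_distrib,
      ← Finset.mul_sum, hww]
    have e1 : ∑ i, (c * β i) * star (β i) = c * s := by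
      rw [hs, Finset.mul_sum]; exact Finset.sum_congr rfl fun i _ => by ring
    have e2 : ∑ i, (star (β i) * c) * β i = c * s := by
      rw [hs, Finset.mul_sum]; exact Finset.sum_congr rfl fun i _ => by ring
    have e3 : ∑ i, star (β i) * β i * c = s * c := by
      rw [hs, Finset.sum_mul]
    rw [e1, e2, e3]; ring
  have key : (s - c^2) * c = c*c*c - c*s := by rw [← Q1, Q2, Q3]
  have h2 : c * (s - c^2) = 0 := by linear_combination key / 2
  rcases mul_eq_zero.mp h2 with h | h
  · right; exact h
  · left; exact sub_eq_zero.mp h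

private lemma lemE {n p : ℕ} (N : Fin p → Matrix (Fin n) (Fin n) ℂ)
    (h0 : ∑ i, N i * (N i)ᴴ = 0) : ∀ i, N i = 0 := by
  intro i0
  ext r q
  have h : (∑ i, N i * (N i)ᴴ) r r = (0 : Matrix (Fin n) (Fin n) ℂ) r r := by rw [h0]
  rw [Matrix.zero_apply] at h
  have h2 : ∑ i, ∑ j, Complex.normSq (N i r j) = 0 := by
    have h3 : (∑ i, ∑ j, (Complex.normSq (N i r j) : ℂ)) = 0 := by
      rw [← h]
      simp only [Matrix.sum_apply, Matrix.mul_apply, Matrix.conjTranspose_apply]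
      refine Finset.sum_congr rfl fun i _ => Finset.sum_congr rfl fun j _ => ?_
      rw [← Complex.mul_conj]; rfl
    exact_mod_cast h3
  have h4 : ∀ i ∈ Finset.univ, ∀ j ∈ Finset.univ, Complex.normSq (N i r j) = 0 := by
    intro i _ j _
    have := (Finset.sum_eq_zero_iff_of_nonneg (fun i _ =>
      Finset.sum_nonneg fun j _ => Complex.normSq_nonneg _)).mp h2 i (Finset.mem_univ i)
    exact (Finset.sum_eq_zero_iff_of_nonneg fun j _ => Complex.normSq_nonneg _).mp this j
      (Finset.mem_univ j)
  simpa using Complex.normSq_eq_zero.mp (h4 i0 (Finset.mem_univ i0) q (Finset.mem_univ q))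

private lemma lemF {n : ℕ} (x : Fin n → ℂ) (k : Fin n) (hk : x k ≠ 0) :
    star x ⬝ᵥ x = ((∑ a, ‖x a‖^2 : ℝ) : ℂ) ∧ (0:ℝ) < ∑ a, ‖x a‖^2 := by
  have h1 : star x ⬝ᵥ x = ((∑ a, ‖x a‖^2 : ℝ) : ℂ) := by
    push_cast
    simp only [dotProduct, Pi.star_apply]
    refine Finset.sum_congr rfl fun a _ => ?_
    rw [star_mul_self_eq (x a)]; push_cast; ring
  refine ⟨h1, Finset.sum_pos' (fun a _ => by positivity)
    ⟨k, Finset.mem_univ k, pow_pos (norm_pos_iff.mpr hk) 2⟩⟩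

open Matrix ComplexOrder in
theorem stmt_11 {n : ℕ}
    (σ : Matrix (Fin n) (Fin n) ℂ) (hσ : σ.PosSemidef) (hσtr : σ.trace = 1)
    (P : Matrix (Fin n) (Fin n) ℂ) (hP1 : Pᴴ = P) (hP2 : P * P = P)
    (hsupp : ∀ B : Matrix (Fin n) (Fin n) ℂ, (σ * (Bᴴ * B)).trace = 0 ↔ B * P = 0)
    {p : ℕ} (V : Fin p → Matrix (Fin n) (Fin n) ℂ)
    (hunital : ∑ i, V i * (V i)ᴴ = 1)
    (hae : ∀ A : Matrix (Fin n) (Fin n) ℂ, (∑ i, V i * A * (V i)ᴴ) * P = A * P) :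
    ∃ α : Fin p → ℂ,
      (∀ i, V i = α i • (1 : Matrix (Fin n) (Fin n) ℂ)) ∧
      (∑ i, ‖α i‖ ^ 2 = 1) ∧
      (∀ A : Matrix (Fin n) (Fin n) ℂ, ∑ i, V i * A * (V i)ᴴ = A) := by
  -- P is nonzero
  have hP0 : P ≠ 0 := by
    intro h
    have h1 : (σ * ((1:Matrix (Fin n) (Fin n) ℂ)ᴴ * 1)).trace = 0 := (hsupp 1).mpr (by simp [h])
    simp [hσtr] at h1
  obtain ⟨k, l, hkl⟩ : ∃ k l, P k l ≠ 0 := by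
    by_contra h
    push_neg at h
    exact hP0 (Matrix.ext fun a b => by simp [h a b])
  set x : Fin n → ℂ := fun a => P a l with hxdef
  have hxk : x k ≠ 0 := hkl
  have hPe : P *ᵥ Pi.single l 1 = x := by
    rw [Matrix.mulVec_single]; funext a; simp [hxdef]
  have haev : ∀ A : Matrix (Fin n) (Fin n) ℂ,
      ∑ i, (V i) *ᵥ (A *ᵥ ((V i)ᴴ *ᵥ x)) = A *ᵥ x := by
    intro A
    have h2 : ((∑ i, V i * A * (V i)ᴴ) * P) *ᵥ Pi.single l 1 = (A * P) *ᵥ Pi.single l 1 := by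
      rw [hae A]
    rw [← Matrix.mulVec_mulVec, ← Matrix.mulVec_mulVec, hPe, sum_mulVec'] at h2
    simpa only [← Matrix.mulVec_mulVec] using h2
  have hcs : star (star x ⬝ᵥ x) = star x ⬝ᵥ x := (star_dotProduct x x).symm
  obtain ⟨hcreal, hcpos⟩ := lemF x k hxk
  have hc0 : (star x ⬝ᵥ x) ≠ 0 := by
    rw [hcreal]; exact_mod_cast hcpos.ne'
  have hβV := lemB x V haev
  have hNsum := lemC (star x ⬝ᵥ x) (∑ i, star (star x ⬝ᵥ ((V i)ᴴ *ᵥ x)) * (star x ⬝ᵥ ((V i)ᴴ *ᵥ x)))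
    (fun i => star x ⬝ᵥ ((V i)ᴴ *ᵥ x)) hcs rfl V hunital hβV
  have hsor := lemD x V
    (fun i => (star x ⬝ᵥ x) • V i - star (star x ⬝ᵥ ((V i)ᴴ *ᵥ x)) • 1)
    hcs hunital (fun i => rfl) hNsum
  have hs2 : (∑ i, star (star x ⬝ᵥ ((V i)ᴴ *ᵥ x)) * (star x ⬝ᵥ ((V i)ᴴ *ᵥ x)))
      = (star x ⬝ᵥ x)^2 := hsor.resolve_right hc0
  have hNzero : ∑ i, ((star x ⬝ᵥ x) • V i - star (star x ⬝ᵥ ((V i)ᴴ *ᵥ x)) • 1)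
      * ((star x ⬝ᵥ x) • V i - star (star x ⬝ᵥ ((V i)ᴴ *ᵥ x)) • (1 : Matrix (Fin n) (Fin n) ℂ))ᴴ
      = 0 := by
    rw [hNsum, hs2, sub_self, zero_smul]
  have hNi := lemE _ hNzero
  -- define α
  have hVα : ∀ i, V i
      = (star (star x ⬝ᵥ ((V i)ᴴ *ᵥ x)) / (star x ⬝ᵥ x)) • (1 : Matrix (Fin n) (Fin n) ℂ) := by
    intro i
    have h2 : (star x ⬝ᵥ x) • V i = star (star x ⬝ᵥ ((V i)ᴴ *ᵥ x)) • 1 := sub_eq_zero.mp (hNi i)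
    calc V i = ((star x ⬝ᵥ x)⁻¹ * (star x ⬝ᵥ x)) • V i := by
          rw [inv_mul_cancel₀ hc0, one_smul]
      _ = (star x ⬝ᵥ x)⁻¹ • ((star x ⬝ᵥ x) • V i) := by rw [mul_smul]
      _ = (star x ⬝ᵥ x)⁻¹ • (star (star x ⬝ᵥ ((V i)ᴴ *ᵥ x)) • 1) := by rw [h2]
      _ = (star (star x ⬝ᵥ ((V i)ᴴ *ᵥ x)) / (star x ⬝ᵥ x)) • 1 := by
          rw [smul_smul, div_eq_inv_mul]
  have hnc : ‖star x ⬝ᵥ x‖ = ∑ a, ‖x a‖^2 := by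
    rw [hcreal, Complex.norm_real, Real.norm_eq_abs, abs_of_pos hcpos]
  have hβnorm : ∑ i, ‖star x ⬝ᵥ ((V i)ᴴ *ᵥ x)‖^2 = (∑ a, ‖x a‖^2)^2 := by
    have h1 : ((∑ i, ‖star x ⬝ᵥ ((V i)ᴴ *ᵥ x)‖^2 : ℝ) : ℂ) = (((∑ a, ‖x a‖^2)^2 : ℝ) : ℂ) := by
      push_cast
      rw [show (∑ i, ((‖star x ⬝ᵥ ((V i)ᴴ *ᵥ x)‖:ℂ))^2)
          = ∑ i, star (star x ⬝ᵥ ((V i)ᴴ *ᵥ x)) * (star x ⬝ᵥ ((V i)ᴴ *ᵥ x)) from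
        Finset.sum_congr rfl fun i _ => by rw [star_mul_self_eq]; push_cast; ring]
      rw [hs2, hcreal]
      push_cast
      ring
    exact_mod_cast h1
  have hnormsum : ∑ i, ‖star (star x ⬝ᵥ ((V i)ᴴ *ᵥ x)) / (star x ⬝ᵥ x)‖ ^ 2 = 1 := by
    have : ∀ i, ‖star (star x ⬝ᵥ ((V i)ᴴ *ᵥ x)) / (star x ⬝ᵥ x)‖ ^ 2
        = ‖star x ⬝ᵥ ((V i)ᴴ *ᵥ x)‖^2 / (∑ a, ‖x a‖^2)^2 := by
      intro i
      rw [norm_div, norm_star, hnc, div_pow]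
    rw [Finset.sum_congr rfl fun i _ => this i, ← Finset.sum_div, hβnorm]
    exact div_self (pow_ne_zero 2 hcpos.ne')
  refine ⟨fun i => star (star x ⬝ᵥ ((V i)ᴴ *ᵥ x)) / (star x ⬝ᵥ x), hVα, hnormsum, ?_⟩
  intro A
  have hαsum : (∑ i, star (star (star x ⬝ᵥ ((V i)ᴴ *ᵥ x)) / (star x ⬝ᵥ x))
      * (star (star x ⬝ᵥ ((V i)ᴴ *ᵥ x)) / (star x ⬝ᵥ x))) = 1 := by
    have h1 : (∑ i, star (star (star x ⬝ᵥ ((V i)ᴴ *ᵥ x)) / (star x ⬝ᵥ x))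
        * (star (star x ⬝ᵥ ((V i)ᴴ *ᵥ x)) / (star x ⬝ᵥ x)))
        = ((∑ i, ‖star (star x ⬝ᵥ ((V i)ᴴ *ᵥ x)) / (star x ⬝ᵥ x)‖^2 : ℝ) : ℂ) := by
      rw [Complex.ofReal_sum]
      exact Finset.sum_congr rfl fun i _ => star_mul_self_eq _
    rw [h1, hnormsum]
    norm_num
  calc ∑ i, V i * A * (V i)ᴴ
      = ∑ i, (star (star (star x ⬝ᵥ ((V i)ᴴ *ᵥ x)) / (star x ⬝ᵥ x))
          * (star (star x ⬝ᵥ ((V i)ᴴ *ᵥ x)) / (star x ⬝ᵥ x))) • A := by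
        refine Finset.sum_congr rfl fun i _ => ?_
        conv_lhs => rw [hVα i]
        simp only [Matrix.conjTranspose_smul, Matrix.conjTranspose_one, smul_mul_assoc,
          mul_smul_comm, one_mul, mul_one, smul_smul]
    _ = (∑ i, star (star (star x ⬝ᵥ ((V i)ᴴ *ᵥ x)) / (star x ⬝ᵥ x))
          * (star (star x ⬝ᵥ ((V i)ᴴ *ᵥ x)) / (star x ⬝ᵥ x))) • A := by
        rw [Finset.sum_smul]
    _ = A := by rw [hαsum, one_smul]
end

section
/- Let F : Mat_m(ℂ) → Mat_n(ℂ) and R : Mat_n(ℂ) → Mat_m(ℂ) be completely positive unital maps with Kraus decompositions R = Σᵢ₌₁^p Ad_{Rᵢ} and F = Σⱼ₌₁^q Ad_{Fⱼ}. If there is a state ξ on Mat_m(ℂ) such that R(F(B))P_ξ = B P_ξ for all B ∈ Mat_m(ℂ), then there exist complex numbers α_{ij} with Rᵢ Fⱼ = α_{ij}·1ₘ for all i, j and Σ_{i,j} |α_{ij}|² = 1. In particular R ∘ F = id on Mat_m(ℂ). -/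
open Matrix in
lemma stmt12_aux_zero {ι : Type*} [Fintype ι] {a b : ℕ} (A : ι → Matrix (Fin a) (Fin b) ℂ)
    (h : ∑ i, ((A i)ᴴ * (A i)).trace = 0) : ∀ i, A i = 0 := by
  have key : ∀ M : Matrix (Fin a) (Fin b) ℂ,
      (Mᴴ * M).trace = ((∑ x, ∑ y, ‖M x y‖ ^ 2 : ℝ) : ℂ) := by
    intro M
    have hc : ∀ z : ℂ, star z * z = ((‖z‖ ^ 2 : ℝ) : ℂ) := by
      intro z
      rw [Complex.star_def, RCLike.conj_mul]
      norm_cast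
    simp only [Matrix.trace, Matrix.diag, Matrix.mul_apply, Matrix.conjTranspose_apply, hc]
    push_cast
    exact Finset.sum_comm
  simp only [key] at h
  have h' : ∑ i, (∑ x, ∑ y, ‖A i x y‖ ^ 2 : ℝ) = 0 := by exact_mod_cast h
  intro i
  have hi : (∑ x, ∑ y, ‖A i x y‖ ^ 2 : ℝ) = 0 :=
    (Finset.sum_eq_zero_iff_of_nonneg (fun _ _ => by positivity)).mp h' i (Finset.mem_univ i)
  ext x y
  have hx : (∑ y, ‖A i x y‖ ^ 2 : ℝ) = 0 :=
    (Finset.sum_eq_zero_iff_of_nonneg (fun _ _ => by positivity)).mp hi x (Finset.mem_univ x)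
  have hy : (‖A i x y‖ ^ 2 : ℝ) = 0 :=
    (Finset.sum_eq_zero_iff_of_nonneg (fun _ _ => by positivity)).mp hx y (Finset.mem_univ y)
  have : ‖A i x y‖ = 0 := by
    nlinarith [norm_nonneg (A i x y)]
  simpa using this

open Matrix ComplexOrder in
theorem stmt_12 {m n : ℕ} {p q : ℕ}
    (R : Fin p → Matrix (Fin m) (Fin n) ℂ) (F : Fin q → Matrix (Fin n) (Fin m) ℂ)
    (hRunital : ∑ i, R i * (R i)ᴴ = 1)
    (hFunital : ∑ j, F j * (F j)ᴴ = 1)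
    (σ : Matrix (Fin m) (Fin m) ℂ) (hσ : σ.PosSemidef) (hσtr : σ.trace = 1)
    (P : Matrix (Fin m) (Fin m) ℂ) (hP1 : Pᴴ = P) (hP2 : P * P = P)
    (hsupp : ∀ B : Matrix (Fin m) (Fin m) ℂ, (σ * (Bᴴ * B)).trace = 0 ↔ B * P = 0)
    (hae : ∀ B : Matrix (Fin m) (Fin m) ℂ,
      (∑ i, R i * (∑ j, F j * B * (F j)ᴴ) * (R i)ᴴ) * P = B * P) :
    ∃ α : Fin p → Fin q → ℂ,
      (∀ i j, R i * F j = α i j • (1 : Matrix (Fin m) (Fin m) ℂ)) ∧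
      (∑ i, ∑ j, ‖α i j‖ ^ 2 = 1) ∧
      (∀ B : Matrix (Fin m) (Fin m) ℂ,
        ∑ i, R i * (∑ j, F j * B * (F j)ᴴ) * (R i)ᴴ = B) := by
  -- m is positive
  rcases Nat.eq_zero_or_pos m with hm | hm
  · subst hm
    simp [Matrix.trace] at hσtr
  set T : Fin p → Fin q → Matrix (Fin m) (Fin m) ℂ := fun i j => R i * F j with hTdef
  -- rewrite the composite channel with combined Kraus operators
  have hPhi : ∀ B : Matrix (Fin m) (Fin m) ℂ,
      ∑ i, R i * (∑ j, F j * B * (F j)ᴴ) * (R i)ᴴ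
        = ∑ i, ∑ j, T i j * B * (T i j)ᴴ := by
    intro B
    refine Finset.sum_congr rfl fun i _ => ?_
    rw [Matrix.mul_sum, Matrix.sum_mul]
    refine Finset.sum_congr rfl fun j _ => ?_
    simp only [hTdef]
    rw [Matrix.conjTranspose_mul]
    simp only [Matrix.mul_assoc]
  -- the combined Kraus operators are co-isometric on average
  have hT1 : ∑ i, ∑ j, T i j * (T i j)ᴴ = 1 := by
    have h := hPhi 1
    simp only [Matrix.mul_one] at h
    rw [← h, hFunital]
    simpa using hRunital
  have hae' : ∀ B : Matrix (Fin m) (Fin m) ℂ,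
      (∑ i, ∑ j, T i j * B * (T i j)ᴴ) * P = B * P := by
    intro B
    rw [← hPhi B]
    exact hae B
  have hPhiH : ∀ B : Matrix (Fin m) (Fin m) ℂ,
      (∑ i, ∑ j, T i j * B * (T i j)ᴴ)ᴴ = ∑ i, ∑ j, T i j * Bᴴ * (T i j)ᴴ := by
    intro B
    simp [Matrix.conjTranspose_sum, Matrix.conjTranspose_mul, Matrix.mul_assoc]
  have hae2 : ∀ B : Matrix (Fin m) (Fin m) ℂ,
      P * (∑ i, ∑ j, T i j * B * (T i j)ᴴ) = P * B := by
    intro B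
    have h := congrArg Matrix.conjTranspose (hae' Bᴴ)
    rw [Matrix.conjTranspose_mul, Matrix.conjTranspose_mul, hP1, hPhiH,
      Matrix.conjTranspose_conjTranspose] at h
    exact h
  -- key commutation relation
  have hA0 : ∀ (B : Matrix (Fin m) (Fin m) ℂ) (i : Fin p) (j : Fin q),
      ((Bᴴ * T i j - T i j * Bᴴ)ᴴ) * P = 0 := by
    intro B
    set S : Fin p → Fin q → Matrix (Fin m) (Fin m) ℂ :=
      fun i j => Bᴴ * T i j - T i j * Bᴴ with hSdef
    have expand : ∀ (i : Fin p) (j : Fin q),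
        ((S i j)ᴴ * P)ᴴ * ((S i j)ᴴ * P)
        = P * Bᴴ * (T i j * (T i j)ᴴ) * B * P
          - P * Bᴴ * (T i j * B * (T i j)ᴴ) * P
          - P * (T i j * Bᴴ * (T i j)ᴴ) * B * P
          + P * (T i j * (Bᴴ * B) * (T i j)ᴴ) * P := by
      intro i j
      simp only [hSdef, Matrix.conjTranspose_mul, Matrix.conjTranspose_sub,
        Matrix.conjTranspose_conjTranspose, hP1]
      noncomm_ring
    have hsumB : ∑ i, ∑ j, ((S i j)ᴴ * P)ᴴ * ((S i j)ᴴ * P) = 0 := by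
      calc ∑ i, ∑ j, ((S i j)ᴴ * P)ᴴ * ((S i j)ᴴ * P)
          = ∑ i, ∑ j, (P * Bᴴ * (T i j * (T i j)ᴴ) * B * P
              - P * Bᴴ * (T i j * B * (T i j)ᴴ) * P
              - P * (T i j * Bᴴ * (T i j)ᴴ) * B * P
              + P * (T i j * (Bᴴ * B) * (T i j)ᴴ) * P) := by
            exact Finset.sum_congr rfl fun i _ => Finset.sum_congr rfl fun j _ => expand i j
        _ = P * Bᴴ * (∑ i, ∑ j, T i j * (T i j)ᴴ) * B * P
              - P * Bᴴ * (∑ i, ∑ j, T i j * B * (T i j)ᴴ) * P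
              - P * (∑ i, ∑ j, T i j * Bᴴ * (T i j)ᴴ) * B * P
              + P * (∑ i, ∑ j, T i j * (Bᴴ * B) * (T i j)ᴴ) * P := by
            simp only [Finset.sum_sub_distrib, Finset.sum_add_distrib,
              ← Finset.sum_mul, ← Finset.mul_sum]
        _ = 0 := by
            have e1 : P * Bᴴ * (∑ i, ∑ j, T i j * (T i j)ᴴ) * B * P
                = P * Bᴴ * B * P := by rw [hT1, Matrix.mul_one]
            have e2 : P * Bᴴ * (∑ i, ∑ j, T i j * B * (T i j)ᴴ) * P
                = P * Bᴴ * (B * P) := by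
              rw [Matrix.mul_assoc (P * Bᴴ), hae' B]
            have e3 : P * (∑ i, ∑ j, T i j * Bᴴ * (T i j)ᴴ) * B * P
                = P * Bᴴ * B * P := by rw [hae2 Bᴴ]
            have e4 : P * (∑ i, ∑ j, T i j * (Bᴴ * B) * (T i j)ᴴ) * P
                = P * (Bᴴ * B * P) := by
              rw [Matrix.mul_assoc P, hae' (Bᴴ * B)]
            rw [e1, e2, e3, e4]
            noncomm_ring
    have htr : ∑ x : Fin p × Fin q,
        ((((S x.1 x.2)ᴴ * P)ᴴ) * ((S x.1 x.2)ᴴ * P)).trace = 0 := by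
      rw [Fintype.sum_prod_type]
      simp only [← Matrix.trace_sum]
      rw [hsumB, Matrix.trace_zero]
    intro i j
    exact stmt12_aux_zero (fun x : Fin p × Fin q => (S x.1 x.2)ᴴ * P) htr (i, j)
  -- commutation in usable form
  have hcomm : ∀ (B : Matrix (Fin m) (Fin m) ℂ) (i : Fin p) (j : Fin q),
      (T i j)ᴴ * B * P = B * (T i j)ᴴ * P := by
    intro B i j
    have h := hA0 B i j
    simp only [Matrix.conjTranspose_sub, Matrix.conjTranspose_mul,
      Matrix.conjTranspose_conjTranspose, sub_mul] at h
    rw [sub_eq_zero] at h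
    exact h
  -- P is nonzero; get a fixed vector
  have hPne : P ≠ 0 := by
    intro h
    have h0 : (1 : Matrix (Fin m) (Fin m) ℂ) * P = 0 := by rw [h, Matrix.mul_zero]
    have := (hsupp 1).mpr h0
    simp [hσtr] at this
  obtain ⟨k, l, hkl⟩ : ∃ k l, P k l ≠ 0 := by
    by_contra h
    push_neg at h
    exact hPne (by ext a b; simpa using h a b)
  set v : Fin m → ℂ := fun r => P r l with hvdef
  have hv : P *ᵥ v = v := by
    funext r
    have h2 := congrFun (congrFun hP2 r) l
    simpa [Matrix.mulVec, dotProduct, Matrix.mul_apply, hvdef] using h2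
  have hvne : v ≠ 0 := by
    intro h
    exact hkl (by simpa [hvdef] using congrFun h k)
  have hd : (star v) ⬝ᵥ v ≠ 0 := fun h => hvne (dotProduct_star_self_eq_zero.mp h)
  -- every combined Kraus operator is scalar
  have hscalar : ∀ (i : Fin p) (j : Fin q),
      ∃ a : ℂ, R i * F j = a • (1 : Matrix (Fin m) (Fin m) ℂ) := by
    intro i j
    set M : Matrix (Fin m) (Fin m) ℂ := (T i j)ᴴ with hMdef
    have hvec : ∀ B : Matrix (Fin m) (Fin m) ℂ, M *ᵥ (B *ᵥ v) = B *ᵥ (M *ᵥ v) := by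
      intro B
      have h := hcomm B i j
      calc M *ᵥ (B *ᵥ v) = (M * B) *ᵥ v := Matrix.mulVec_mulVec v M B
        _ = (M * B) *ᵥ (P *ᵥ v) := by rw [hv]
        _ = (M * B * P) *ᵥ v := Matrix.mulVec_mulVec v (M * B) P
        _ = (B * M * P) *ᵥ v := by rw [h]
        _ = (B * M) *ᵥ (P *ᵥ v) := (Matrix.mulVec_mulVec v (B * M) P).symm
        _ = (B * M) *ᵥ v := by rw [hv]
        _ = B *ᵥ (M *ᵥ v) := (Matrix.mulVec_mulVec v B M).symm
    set d : ℂ := (star v) ⬝ᵥ v with hddef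
    set w : Fin m → ℂ := M *ᵥ v with hwdef
    set c : ℂ := (star v) ⬝ᵥ w with hcdef
    have hBu : ∀ (u x : Fin m → ℂ),
        (Matrix.vecMulVec u (star v)) *ᵥ x = ((star v) ⬝ᵥ x) • u := by
      intro u x
      funext r
      simp only [Matrix.mulVec, dotProduct, Matrix.vecMulVec_apply, Pi.smul_apply,
        smul_eq_mul]
      rw [Finset.sum_mul]
      exact Finset.sum_congr rfl fun s _ => by ring
    have hMu : ∀ u : Fin m → ℂ, M *ᵥ u = (d⁻¹ * c) • u := by
      intro u
      have h := hvec (Matrix.vecMulVec u (star v))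
      rw [hBu u v, hBu u w] at h
      rw [Matrix.mulVec_smul] at h
      -- h : d • (M *ᵥ u) = c • u
      have h2 := congrArg (fun z => d⁻¹ • z) h
      simp only [← hddef, ← hcdef, smul_smul, inv_mul_cancel₀ hd, one_smul] at h2
      rw [h2]
    have hM1 : M = (d⁻¹ * c) • (1 : Matrix (Fin m) (Fin m) ℂ) := by
      ext a b
      have h := congrFun (hMu (Pi.single b 1)) a
      rw [Matrix.mulVec_single] at h
      simp only [mul_one, Pi.smul_apply, smul_eq_mul, MulOpposite.op_one, one_smul, Matrix.col_apply] at h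
      rw [h]
      by_cases hab : a = b <;> simp [hab, Matrix.one_apply, Pi.single_apply]
    refine ⟨star (d⁻¹ * c), ?_⟩
    have : (R i * F j) = Mᴴ := by rw [hMdef, hTdef, Matrix.conjTranspose_conjTranspose]
    rw [this, hM1]
    simp
  choose α hα using hscalar
  -- the scalar sum identity
  have hsum2 : (∑ i, ∑ j, α i j * star (α i j)) = 1 := by
    have h1 : ∑ i, ∑ j, T i j * (T i j)ᴴ
        = (∑ i, ∑ j, α i j * star (α i j)) • (1 : Matrix (Fin m) (Fin m) ℂ) := by
      rw [Finset.sum_smul]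
      refine Finset.sum_congr rfl fun i _ => ?_
      rw [Finset.sum_smul]
      refine Finset.sum_congr rfl fun j _ => ?_
      have : T i j = α i j • (1 : Matrix (Fin m) (Fin m) ℂ) := hα i j
      rw [this]
      simp [Matrix.conjTranspose_smul, smul_smul, mul_comm]
    rw [hT1] at h1
    have h00 := congrFun (congrFun h1 ⟨0, hm⟩) ⟨0, hm⟩
    simp only [Matrix.smul_apply, Matrix.one_apply_eq, smul_eq_mul, mul_one] at h00
    exact h00.symm
  have hnorm : ∀ z : ℂ, z * star z = ((‖z‖ : ℝ) : ℂ) ^ 2 := by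
    intro z
    rw [Complex.star_def, RCLike.mul_conj]
    norm_cast
  refine ⟨α, hα, ?_, ?_⟩
  · have : ((∑ i, ∑ j, ‖α i j‖ ^ 2 : ℝ) : ℂ) = 1 := by
      push_cast
      rw [← hsum2]
      exact Finset.sum_congr rfl fun i _ => Finset.sum_congr rfl fun j _ =>
        (hnorm (α i j)).symm
    exact_mod_cast this
  · intro B
    rw [hPhi B]
    have hterm : ∀ (i : Fin p) (j : Fin q),
        T i j * B * (T i j)ᴴ = (α i j * star (α i j)) • B := by
      intro i j
      have h : T i j = α i j • (1 : Matrix (Fin m) (Fin m) ℂ) := hα i j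
      rw [h]
      simp only [Matrix.conjTranspose_smul, Matrix.conjTranspose_one]
      rw [Matrix.smul_mul, Matrix.one_mul, Matrix.smul_mul, Matrix.mul_smul,
        Matrix.mul_one, smul_smul, mul_comm]
    calc ∑ i, ∑ j, T i j * B * (T i j)ᴴ
        = ∑ i, ∑ j, (α i j * star (α i j)) • B := by
          exact Finset.sum_congr rfl fun i _ => Finset.sum_congr rfl fun j _ => hterm i j
      _ = (∑ i, ∑ j, α i j * star (α i j)) • B := by
          rw [Finset.sum_smul]
          exact Finset.sum_congr rfl fun i _ => (Finset.sum_smul).symm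
      _ = (1 : ℂ) • B := by rw [hsum2]
      _ = B := one_smul _ _
end
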